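/- Let J be the 5×5 real matrix (1/2)·[[−γ₁,0,κ₁,0,0],[0,−γ₁,0,κ₁,0],[−bS₃,0,0,0,0],[0,−bS₃,0,0,0],[bS₁,bS₂,0,0,0]] with γ₁, κ₁, b > 0, S₁,S₂,S₃ ∈ ℝ. Then det(2J − λI) = −λ(λ² + λγ₁ + bκ₁S₃)², so the eigenvalues of 2J are 0 and the two roots of λ² + γ₁λ + bκ₁S₃ = 0, each with algebraic multiplicity 2. -/

import Mathlib

open Matrix

set_option maxHeartbeats 4000000 in
/-- Characteristic polynomial factorization at states in `Z₂`:
`det(2J − λI) = −λ(λ² + λγ₁ + bκ₁S₃)²`. -/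
theorem stmt14 (γ₁ κ₁ b S₁ S₂ S₃ : ℝ) (hγ₁ : 0 < γ₁) (hκ₁ : 0 < κ₁) (hb : 0 < b)
    (J : Matrix (Fin 5) (Fin 5) ℝ)
    (hJ : J = (1/2 : ℝ) • !![-γ₁, 0, κ₁, 0, 0;
                             0, -γ₁, 0, κ₁, 0;
                             -(b * S₃), 0, 0, 0, 0;
                             0, -(b * S₃), 0, 0, 0;
                             b * S₁, b * S₂, 0, 0, 0]) :
    ∀ lam : ℝ, ((2 : ℝ) • J - lam • (1 : Matrix (Fin 5) (Fin 5) ℝ)).det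
      = -lam * (lam ^ 2 + lam * γ₁ + b * κ₁ * S₃) ^ 2 := by
  intro lam
  have h : (2 : ℝ) • J - lam • (1 : Matrix (Fin 5) (Fin 5) ℝ) =
      !![-γ₁ - lam, 0, κ₁, 0, 0;
         0, -γ₁ - lam, 0, κ₁, 0;
         -(b * S₃), 0, -lam, 0, 0;
         0, -(b * S₃), 0, -lam, 0;
         b * S₁, b * S₂, 0, 0, -lam] := by
    subst hJ
    ext i j
    fin_cases i <;> fin_cases j <;>
      simp [Matrix.one_apply, Matrix.smul_apply, Matrix.vecHead, Matrix.vecTail] <;> ring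
  rw [h]
  simp [Matrix.det_succ_row_zero, Fin.sum_univ_succ, Fin.succAbove]
  ring
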